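/- Let (X, d_X) and (Y, d_Y) be metric spaces. If X is nearly isometrically embeddable into Y, then for every 0 < s₁ ≤ s₂ < ∞ there exists a map f : X → Y such that d_Y(f(x),f(y)) = d_X(x,y) whenever d_X(x,y) ∈ [s₁, s₂]. -/

import Mathlib

/-- If `X` is nearly isometrically embeddable into `Y`, then for all
`0 < s₁ ≤ s₂ < ∞`, `X` admits an isometric range embedding with range `[s₁,s₂]`. -/
theorem stmt8 {X Y : Type*} [MetricSpace X] [MetricSpace Y]
    (h : ∀ ρ ω : ℝ → ℝ,
      ContinuousOn ρ (Set.Ici 0) → ContinuousOn ω (Set.Ici 0) →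
      (∀ t ≥ (0:ℝ), 0 ≤ ρ t) → (∀ t ≥ (0:ℝ), 0 ≤ ω t) →
      (∀ t ∈ Set.Icc (0:ℝ) 1, t ≤ ω t) → (∀ t ≥ (1:ℝ), ω t = t) →
      ω 0 = 0 →
      Filter.Tendsto (fun t => ω t / t) (nhdsWithin 0 (Set.Ioi 0)) Filter.atTop →
      (∀ t ∈ Set.Icc (0:ℝ) 1, ρ t = t) → (∀ t ≥ (1:ℝ), ρ t ≤ t) →
      Filter.Tendsto (fun t => ρ t / t) Filter.atTop (nhds 0) →
      ∃ f : X → Y, ∀ x y : X,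
        ρ (dist x y) ≤ dist (f x) (f y) ∧ dist (f x) (f y) ≤ ω (dist x y)) :
    ∀ s₁ s₂ : ℝ, 0 < s₁ → s₁ ≤ s₂ →
      ∃ f : X → Y, ∀ x y : X,
        dist x y ∈ Set.Icc s₁ s₂ → dist (f x) (f y) = dist x y := by
  intro s₁ s₂ hs₁ hs₁₂
  set s : ℝ := min s₁ 1 with hs_def
  set S : ℝ := max s₂ 1 with hS_def
  have hs_pos : 0 < s := lt_min hs₁ one_pos
  have hs_le : s ≤ 1 := min_le_right _ _
  have hS_ge : 1 ≤ S := le_max_right _ _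
  set ρ : ℝ → ℝ := fun t => min t (Real.sqrt (S * t)) with hρ_def
  set ω : ℝ → ℝ := fun t => max t (Real.sqrt (s * t)) with hω_def
  -- key computation lemmas
  have hρ_eq : ∀ t, 0 ≤ t → t ≤ S → ρ t = t := by
    intro t ht htS
    refine min_eq_left ?_
    have h1 : Real.sqrt (t * t) ≤ Real.sqrt (S * t) :=
      Real.sqrt_le_sqrt (mul_le_mul_of_nonneg_right htS ht)
    rwa [Real.sqrt_mul_self ht] at h1
  have hω_eq : ∀ t, s ≤ t → ω t = t := by
    intro t hst
    have ht : 0 ≤ t := le_trans hs_pos.le hst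
    refine max_eq_left ?_
    have h1 : Real.sqrt (s * t) ≤ Real.sqrt (t * t) :=
      Real.sqrt_le_sqrt (mul_le_mul_of_nonneg_right hst ht)
    rwa [Real.sqrt_mul_self ht] at h1
  have homega : Filter.Tendsto (fun t => ω t / t) (nhdsWithin 0 (Set.Ioi 0)) Filter.atTop := by
    have hbase : Filter.Tendsto (fun t : ℝ => Real.sqrt (s / t))
        (nhdsWithin 0 (Set.Ioi 0)) Filter.atTop := by
      have hsqrt : Filter.Tendsto Real.sqrt Filter.atTop Filter.atTop := by
        refine Filter.tendsto_atTop_atTop.2 fun b => ⟨(max b 0) ^ 2, fun a ha => ?_⟩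
        calc b ≤ max b 0 := le_max_left _ _
          _ = Real.sqrt ((max b 0) ^ 2) := (Real.sqrt_sq (le_max_right _ _)).symm
          _ ≤ Real.sqrt a := Real.sqrt_le_sqrt ha
      apply hsqrt.comp
      have : Filter.Tendsto (fun t : ℝ => t⁻¹) (nhdsWithin 0 (Set.Ioi 0)) Filter.atTop :=
        tendsto_inv_nhdsGT_zero
      have := Filter.Tendsto.const_mul_atTop hs_pos this
      exact this.congr fun t => (div_eq_mul_inv s t).symm
    refine Filter.tendsto_atTop_mono' _ ?_ hbase
    filter_upwards [self_mem_nhdsWithin] with t ht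
    have ht' : (0:ℝ) < t := ht
    have key : Real.sqrt (s / t) ≤ Real.sqrt (s * t) / t := by
      rw [le_div_iff₀ ht']
      rw [show Real.sqrt (s / t) * t = Real.sqrt (s / t * (t * t)) by
        rw [Real.sqrt_mul (by positivity), Real.sqrt_mul_self ht'.le]]
      apply Real.sqrt_le_sqrt
      rw [div_mul_eq_mul_div, mul_comm t t, ← mul_assoc, mul_div_assoc,
        div_self ht'.ne', mul_one]
    exact le_trans key (div_le_div_of_nonneg_right (le_max_right _ _) ht'.le)
  have hrho : Filter.Tendsto (fun t => ρ t / t) Filter.atTop (nhds 0) := by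
    have hbase : Filter.Tendsto (fun t : ℝ => Real.sqrt (S / t)) Filter.atTop (nhds 0) := by
      have h1 : Filter.Tendsto (fun t : ℝ => S / t) Filter.atTop (nhds 0) :=
        Filter.Tendsto.const_div_atTop Filter.tendsto_id S
      have := (Real.continuous_sqrt.tendsto 0).comp h1
      rw [Real.sqrt_zero] at this
      exact this
    apply squeeze_zero' (g := fun t => Real.sqrt (S / t))
    · filter_upwards [Filter.eventually_gt_atTop 0] with t ht
      exact div_nonneg (le_min ht.le (Real.sqrt_nonneg _)) ht.le
    · filter_upwards [Filter.eventually_gt_atTop 0] with t ht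
      have key : Real.sqrt (S * t) / t ≤ Real.sqrt (S / t) := by
        rw [div_le_iff₀ ht]
        rw [show Real.sqrt (S / t) * t = Real.sqrt (S / t * (t * t)) by
          rw [Real.sqrt_mul (by positivity), Real.sqrt_mul_self ht.le]]
        apply Real.sqrt_le_sqrt
        rw [div_mul_eq_mul_div, mul_comm t t, ← mul_assoc, mul_div_assoc,
          div_self ht.ne', mul_one]
      refine le_trans ?_ key
      exact div_le_div_of_nonneg_right (min_le_right _ _) ht.le
    · exact hbase
  obtain ⟨f, hf⟩ := h ρ ω
    ((continuous_id.min (Real.continuous_sqrt.comp (continuous_const.mul continuous_id))).continuousOn)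
    ((continuous_id.max (Real.continuous_sqrt.comp (continuous_const.mul continuous_id))).continuousOn)
    (fun t ht => le_min ht (Real.sqrt_nonneg _))
    (fun t ht => le_trans ht (le_max_left _ _))
    (fun t _ => le_max_left _ _)
    (fun t ht => hω_eq t (le_trans hs_le ht))
    (by simp [hω_def])
    homega
    (fun t ht => hρ_eq t ht.1 (le_trans ht.2 hS_ge))
    (fun t _ => min_le_left _ _)
    hrho
  refine ⟨f, fun x y hd => ?_⟩
  have h1 := (hf x y).1
  have h2 := (hf x y).2
  rw [hρ_eq _ (dist_nonneg) (le_trans hd.2 (le_max_left _ _))] at h1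
  rw [hω_eq _ (le_trans (min_le_left _ _) hd.1)] at h2
  exact le_antisymm h2 h1
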